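/- Let d ≥ 2, s ∈ {0,1}^d, let f be a generator, and let U = (U_1,…,U_d) be a random vector in [0,1]^d whose law has density c_f^s with respect to Lebesgue measure. Then: (i) the random variable Y := frac(Σ_{k=1}^d Ũ_k), where Ũ_k := U_k if s_k = 0 and Ũ_k := 1 − U_k if s_k = 1, has density f; (ii) for each j ∈ {1,…,d}, the random vector U_{−j} (obtained by deleting the j-th component of U) is uniformly distributed on [0,1]^{d−1}; and (iii) Y and U_{−j} are independent. -/

import Mathlib

open MeasureTheory

/-- A generator: a probability density on `[0,1]`. -/
def IsGenerator (f : ℝ → ℝ) : Prop :=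
  Measurable f ∧ (∀ x ∈ Set.Icc (0:ℝ) 1, 0 ≤ f x) ∧ ∫ x in Set.Icc (0:ℝ) 1, f x = 1

open Set
open scoped ENNReal

-- translation of set lintegral
lemma lint_shift (g : ℝ → ℝ≥0∞) (a b c : ℝ) :
    ∫⁻ x in Set.Ico a b, g (x + c) = ∫⁻ x in Set.Ico (a+c) (b+c), g x := by
  rw [← lintegral_indicator measurableSet_Ico, ← lintegral_indicator measurableSet_Ico]
  have : ∀ x, (Set.Ico a b).indicator (fun x => g (x + c)) x
      = (Set.Ico (a+c) (b+c)).indicator g (x + c) := by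
    intro x
    by_cases h : x ∈ Set.Ico a b
    · rw [Set.indicator_of_mem h, Set.indicator_of_mem]
      constructor
      · linarith [h.1]
      · linarith [h.2]
    · rw [Set.indicator_of_notMem h, Set.indicator_of_notMem]
      intro hc
      exact h ⟨by linarith [hc.1], by linarith [hc.2]⟩
  simp_rw [this]
  exact lintegral_add_right_eq_self _ c

lemma lint_fract_add (g : ℝ → ℝ≥0∞) (c : ℝ) :
    ∫⁻ x in Set.Ico (0:ℝ) 1, g (Int.fract (x + c)) = ∫⁻ x in Set.Ico (0:ℝ) 1, g x := by
  -- replace c by its fractional part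
  have hc : ∀ x : ℝ, Int.fract (x + c) = Int.fract (x + Int.fract c) := by
    intro x
    conv_lhs => rw [show x + c = x + Int.fract c + ⌊c⌋ by rw [Int.fract]; push_cast; ring]
    rw [Int.fract_add_intCast]
  simp_rw [hc]
  set c' := Int.fract c with hc'
  have h0 : 0 ≤ c' := Int.fract_nonneg c
  have h1 : c' < 1 := Int.fract_lt_one c
  have hsplit : Set.Ico (0:ℝ) 1 = Set.Ico 0 (1 - c') ∪ Set.Ico (1 - c') 1 :=
    (Set.Ico_union_Ico_eq_Ico (by linarith) (by linarith)).symm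
  have hdisj : Disjoint (Set.Ico (0:ℝ) (1 - c')) (Set.Ico (1 - c') 1) := by
    rw [Set.disjoint_left]; rintro x ⟨_, h2⟩ ⟨h3, _⟩; linarith
  rw [hsplit, lintegral_union measurableSet_Ico hdisj, lintegral_union measurableSet_Ico hdisj]
  have e1 : ∫⁻ x in Set.Ico (0:ℝ) (1 - c'), g (Int.fract (x + c'))
      = ∫⁻ x in Set.Ico c' 1, g x := by
    calc ∫⁻ x in Set.Ico (0:ℝ) (1 - c'), g (Int.fract (x + c'))
        = ∫⁻ x in Set.Ico (0:ℝ) (1 - c'), g (x + c') := by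
          refine setLIntegral_congr_fun measurableSet_Ico ?_
          intro x hx
          dsimp only
          rw [Int.fract_eq_self.mpr ⟨by linarith [hx.1], by linarith [hx.2]⟩]
      _ = ∫⁻ x in Set.Ico ((0:ℝ)+c') (1-c'+c'), g x := lint_shift g 0 (1-c') c'
      _ = ∫⁻ x in Set.Ico c' 1, g x := by norm_num
  have e2 : ∫⁻ x in Set.Ico (1-c') (1:ℝ), g (Int.fract (x + c'))
      = ∫⁻ x in Set.Ico (0:ℝ) c', g x := by
    calc ∫⁻ x in Set.Ico (1-c') (1:ℝ), g (Int.fract (x + c'))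
        = ∫⁻ x in Set.Ico (1-c') (1:ℝ), g (x + (c'-1)) := by
          refine setLIntegral_congr_fun measurableSet_Ico ?_
          intro x hx
          dsimp only
          have : Int.fract (x + c') = Int.fract (x + (c'-1)) := by
            rw [show x + (c'-1) = x + c' + (-1:ℤ) by push_cast; ring, Int.fract_add_intCast]
          rw [this,
            Int.fract_eq_self.mpr ⟨by linarith [hx.1], by linarith [hx.2]⟩]
      _ = ∫⁻ x in Set.Ico ((1-c')+(c'-1)) (1+(c'-1)), g x := lint_shift g _ _ _
      _ = ∫⁻ x in Set.Ico (0:ℝ) c', g x := by norm_num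
  rw [e1, e2, add_comm]
  rw [← lintegral_union measurableSet_Ico (by rw [Set.disjoint_left]; rintro x ⟨_, h2⟩ ⟨h3, _⟩; linarith),
    Set.Ico_union_Ico_eq_Ico (by linarith) (by linarith)]
  rw [hsplit, lintegral_union measurableSet_Ico hdisj]

lemma lint_reflect (G : ℝ → ℝ≥0∞) : ∫⁻ x, G (1 - x) = ∫⁻ x, G x := by
  have h1 : ∫⁻ x, G (1 + x) = ∫⁻ x, G x := lintegral_add_left_eq_self G 1
  have h2 : ∫⁻ x, G (1 + (-x)) = ∫⁻ x, G (1 + x) := by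
    have := lintegral_map_equiv (μ := (volume : Measure ℝ)) (fun y => G (1 + y))
      (MeasurableEquiv.neg ℝ)
    rw [show ⇑(MeasurableEquiv.neg ℝ) = (Neg.neg : ℝ → ℝ) from rfl,
      Measure.map_neg_eq_self (volume : Measure ℝ)] at this
    simpa using this.symm
  simp_rw [sub_eq_add_neg]
  rw [h2, h1]

lemma lint_fract_aff (g : ℝ → ℝ≥0∞) (b : Bool) (c : ℝ) :
    ∫⁻ x in Set.Icc (0:ℝ) 1, g (Int.fract ((if b then 1 - x else x) + c))
      = ∫⁻ x in Set.Icc (0:ℝ) 1, g x := by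
  have base : ∫⁻ x in Set.Icc (0:ℝ) 1, g (Int.fract (x + c))
      = ∫⁻ x in Set.Icc (0:ℝ) 1, g x := by
    rw [← Measure.restrict_congr_set MeasureTheory.Ico_ae_eq_Icc]
    exact lint_fract_add g c
  cases b
  · exact base
  · simp only [if_pos rfl]
    have key : ∀ x, (Set.Icc (0:ℝ) 1).indicator (fun x => g (Int.fract (1 - x + c))) x
        = (Set.Icc (0:ℝ) 1).indicator (fun x => g (Int.fract (x + c))) (1 - x) := by
      intro x
      by_cases h : x ∈ Set.Icc (0:ℝ) 1
      · rw [Set.indicator_of_mem h, Set.indicator_of_mem (Set.mem_Icc.mpr ⟨by linarith [h.2], by linarith [h.1]⟩)]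
      · rw [Set.indicator_of_notMem h, Set.indicator_of_notMem]
        intro hc
        exact h (Set.mem_Icc.mpr ⟨by linarith [hc.2], by linarith [hc.1]⟩)
    rw [← lintegral_indicator measurableSet_Icc]
    show ∫⁻ x, (Set.Icc (0:ℝ) 1).indicator (fun x => g (Int.fract (1 - x + c))) x = _
    simp only [key]
    rw [lint_reflect, lintegral_indicator measurableSet_Icc]
    exact base

lemma restrict_pi_cube {ι : Type*} [Fintype ι] :
    (volume : Measure (ι → ℝ)).restrict (Set.univ.pi fun _ : ι => Set.Icc (0:ℝ) 1)
      = Measure.pi (fun _ : ι => (volume : Measure ℝ).restrict (Set.Icc (0:ℝ) 1)) := by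
  refine (Measure.pi_eq fun t ht => ?_).symm
  rw [Measure.restrict_apply (MeasurableSet.univ_pi ht),
    show (Set.univ.pi t ∩ Set.univ.pi fun _ : ι => Set.Icc (0:ℝ) 1)
      = Set.univ.pi (fun i => t i ∩ Set.Icc (0:ℝ) 1) by rw [← Set.pi_inter_distrib],
    volume_pi_pi]
  congr 1
  ext i
  rw [Measure.restrict_apply (ht i)]

theorem stmt_3 (d : ℕ) (hd : 2 ≤ d) (s : Fin d → Bool) (f : ℝ → ℝ) (hf : IsGenerator f)
    (μ : Measure (Fin d → ℝ))
    (hμ : μ = (volume.restrict (Set.univ.pi fun _ : Fin d => Set.Icc (0:ℝ) 1)).withDensity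
      (fun u => ENNReal.ofReal (f (Int.fract (∑ k : Fin d, if s k then 1 - u k else u k)))))
    (j : Fin d) :
    -- (i) the wrapped sum has density `f`
    (Measure.map (fun u : Fin d → ℝ => Int.fract (∑ k : Fin d, if s k then 1 - u k else u k)) μ
       = (volume.restrict (Set.Icc (0:ℝ) 1)).withDensity (fun x => ENNReal.ofReal (f x)))
    -- (ii) `U₋ⱼ` is uniform on `[0,1]^{d-1}`
    ∧ (Measure.map (fun (u : Fin d → ℝ) (k : {k : Fin d // k ≠ j}) => u k.1) μ
       = volume.restrict (Set.univ.pi fun _ : {k : Fin d // k ≠ j} => Set.Icc (0:ℝ) 1))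
    -- (iii) the wrapped sum and `U₋ⱼ` are independent
    ∧ (Measure.map (fun u : Fin d → ℝ =>
         (Int.fract (∑ k : Fin d, if s k then 1 - u k else u k),
          fun k : {k : Fin d // k ≠ j} => u k.1)) μ
       = (Measure.map (fun u : Fin d → ℝ =>
            Int.fract (∑ k : Fin d, if s k then 1 - u k else u k)) μ).prod
           (Measure.map (fun (u : Fin d → ℝ) (k : {k : Fin d // k ≠ j}) => u k.1) μ)) := by
  classical
  obtain ⟨hfm, hf0, hf1⟩ := hf
  -- abbreviations
  let Y : (Fin d → ℝ) → ℝ := fun u => Int.fract (∑ k : Fin d, if s k then 1 - u k else u k)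
  let P : (Fin d → ℝ) → ({k : Fin d // k ≠ j} → ℝ) := fun u k => u k.1
  let T : (Fin d → ℝ) → ℝ × ({k : Fin d // k ≠ j} → ℝ) := fun u => (Y u, P u)
  let w : (Fin d → ℝ) → ℝ≥0∞ := fun u => ENNReal.ofReal (f (Y u))
  let ν₁ : Measure ℝ :=
    (volume.restrict (Set.Icc (0:ℝ) 1)).withDensity (fun x => ENNReal.ofReal (f x))
  let ν₂ : Measure ({k : Fin d // k ≠ j} → ℝ) :=
    volume.restrict (Set.univ.pi fun _ : {k : Fin d // k ≠ j} => Set.Icc (0:ℝ) 1)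
  -- measurability
  have hSm : Measurable fun u : Fin d → ℝ => ∑ k : Fin d, if s k then 1 - u k else u k := by
    apply Finset.measurable_sum
    intro k _
    by_cases h : s k = true
    · simp only [if_pos h]
      exact (measurable_pi_apply k).const_sub 1
    · simp only [if_neg h]
      exact measurable_pi_apply k
  have hYm : Measurable Y := measurable_fract.comp hSm
  have hPm : Measurable P := measurable_pi_lambda _ fun k => measurable_pi_apply k.1
  have hTm : Measurable T := hYm.prodMk hPm
  have hwm : Measurable w := ENNReal.measurable_ofReal.comp (hfm.comp hYm)
  -- ν₁ is a probability measure
  have hfint : IntegrableOn f (Set.Icc (0:ℝ) 1) volume := by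
    by_contra h
    rw [MeasureTheory.integral_undef h] at hf1
    norm_num at hf1
  have hfae : 0 ≤ᵐ[volume.restrict (Set.Icc (0:ℝ) 1)] f :=
    (ae_restrict_iff' measurableSet_Icc).2 (Filter.Eventually.of_forall hf0)
  have hlf1 : ∫⁻ x in Set.Icc (0:ℝ) 1, ENNReal.ofReal (f x) = 1 := by
    rw [← ofReal_integral_eq_lintegral_ofReal hfint hfae, hf1, ENNReal.ofReal_one]
  have hν₁A : ∀ A : Set ℝ, MeasurableSet A →
      ν₁ A = ∫⁻ x in Set.Icc (0:ℝ) 1, A.indicator (fun t => ENNReal.ofReal (f t)) x := by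
    intro A hA
    rw [show ν₁ A = ∫⁻ x in A, ENNReal.ofReal (f x) ∂(volume.restrict (Set.Icc (0:ℝ) 1))
        from withDensity_apply _ hA,
      ← lintegral_indicator hA]
  have hν₁univ : ν₁ Set.univ = 1 := by
    rw [hν₁A _ MeasurableSet.univ]
    simpa using hlf1
  have hν₂univ : ν₂ Set.univ = 1 := by
    show volume.restrict _ Set.univ = 1
    rw [Measure.restrict_apply_univ, volume_pi_pi]
    simp [Real.volume_Icc]
  haveI : IsProbabilityMeasure ν₁ := ⟨hν₁univ⟩
  haveI : IsProbabilityMeasure ν₂ := ⟨hν₂univ⟩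
  -- the measure-preserving parametrization ψ
  haveI : Unique {k : Fin d // k = j} := ⟨⟨⟨j, rfl⟩⟩, fun x => Subtype.ext x.2⟩
  let e := MeasurableEquiv.piEquivPiSubtypeProd (fun _ : Fin d => ℝ) (fun k => k = j)
  let e₀ := MeasurableEquiv.piUnique (fun _ : {k : Fin d // k = j} => ℝ)
  let ψ : ℝ × ({k : Fin d // k ≠ j} → ℝ) → (Fin d → ℝ) :=
    fun q => e.symm (e₀.symm q.1, q.2)
  have MPψ : MeasurePreserving ψ
      ((volume.restrict (Set.Icc (0:ℝ) 1)).prod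
        (Measure.pi fun _ : {k : Fin d // k ≠ j} => volume.restrict (Set.Icc (0:ℝ) 1)))
      (Measure.pi fun _ : Fin d => volume.restrict (Set.Icc (0:ℝ) 1)) := by
    have h1 := measurePreserving_piEquivPiSubtypeProd
      (fun _ : Fin d => volume.restrict (Set.Icc (0:ℝ) 1)) (fun k => k = j)
    have h0 := measurePreserving_piUnique
      (fun _ : {k : Fin d // k = j} => volume.restrict (Set.Icc (0:ℝ) 1))
    refine (h1.symm e).comp (MeasurePreserving.prod ?_ (MeasurePreserving.id _))
    convert h0.symm e₀ using 2
    rfl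
  have hψ : ∀ (q : ℝ × ({k : Fin d // k ≠ j} → ℝ)) (k : Fin d),
      ψ q k = if h : k = j then q.1 else q.2 ⟨k, h⟩ := by
    intro q k
    rfl
  have hPψ : ∀ q : ℝ × ({k : Fin d // k ≠ j} → ℝ), P (ψ q) = q.2 := by
    intro q
    funext k
    show ψ q k.1 = q.2 k
    rw [hψ, dif_neg k.2]
  have hYψ : ∀ q : ℝ × ({k : Fin d // k ≠ j} → ℝ),
      Y (ψ q) = Int.fract ((if s j then 1 - q.1 else q.1)
        + ∑ k : {k : Fin d // k ≠ j}, (if s k.1 then 1 - q.2 k else q.2 k)) := by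
    intro q
    have hsum : ∑ k : Fin d, (if s k then 1 - ψ q k else ψ q k)
        = (if s j then 1 - q.1 else q.1)
          + ∑ k : {k : Fin d // k ≠ j}, (if s k.1 then 1 - q.2 k else q.2 k) := by
      rw [Fintype.sum_eq_add_sum_compl j]
      have h2 : ∑ k ∈ ({j}ᶜ : Finset (Fin d)), (if s k then 1 - ψ q k else ψ q k)
          = ∑ k : {k : Fin d // k ≠ j}, (if s k.1 then 1 - q.2 k else q.2 k) := by
        rw [Finset.sum_subtype (p := fun k => k ≠ j) ({j}ᶜ : Finset (Fin d)) (fun k => by simp)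
          (fun k => if s k then 1 - ψ q k else ψ q k)]
        refine Finset.sum_congr rfl fun k _ => ?_
        rw [hψ, dif_neg k.2]
      rw [h2, hψ, dif_pos rfl]
    show Int.fract _ = _
    rw [hsum]
  -- the rectangle computation
  have hv2 : ν₂ = Measure.pi (fun _ : {k : Fin d // k ≠ j} => volume.restrict (Set.Icc (0:ℝ) 1)) :=
    restrict_pi_cube
  have hrect : ∀ (A : Set ℝ) (B : Set ({k : Fin d // k ≠ j} → ℝ)),
      MeasurableSet A → MeasurableSet B →
      (Measure.map T μ) (A ×ˢ B) = ν₁ A * ν₂ B := by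
    intro A B hA hB
    have hABm : MeasurableSet (A ×ˢ B) := hA.prod hB
    have hpre : MeasurableSet (T ⁻¹' (A ×ˢ B)) := hTm hABm
    set F : (Fin d → ℝ) → ℝ≥0∞ :=
      fun u => (A.indicator 1 (Y u) * ENNReal.ofReal (f (Y u))) * B.indicator 1 (P u) with hF
    have hFm : Measurable F :=
      (((measurable_const.indicator hA).comp hYm).mul hwm).mul
        ((measurable_const.indicator hB).comp hPm)
    have hind : ∀ u, (T ⁻¹' (A ×ˢ B)).indicator w u = F u := by
      intro u
      by_cases h1 : Y u ∈ A <;> by_cases h2 : P u ∈ B <;>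
        simp [hF, Set.indicator_apply, Set.mem_preimage, Set.mem_prod, h1, h2, w, T]
    have hG : ∀ (c : ℝ),
        ∫⁻ x in Set.Icc (0:ℝ) 1,
          (A.indicator 1 (Int.fract ((if s j then 1 - x else x) + c))
            * ENNReal.ofReal (f (Int.fract ((if s j then 1 - x else x) + c)))) = ν₁ A := by
      intro c
      rw [lint_fract_aff (fun t => A.indicator 1 t * ENNReal.ofReal (f t)) (s j) c, hν₁A A hA]
      refine setLIntegral_congr_fun measurableSet_Icc (fun x _ => ?_)
      by_cases h : x ∈ A <;> simp [Set.indicator_apply, h]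
    calc (Measure.map T μ) (A ×ˢ B)
        = μ (T ⁻¹' (A ×ˢ B)) := Measure.map_apply hTm hABm
      _ = ∫⁻ u in T ⁻¹' (A ×ˢ B), w u
            ∂(volume.restrict (Set.univ.pi fun _ : Fin d => Set.Icc (0:ℝ) 1)) := by
          rw [hμ]; exact withDensity_apply _ hpre
      _ = ∫⁻ u, (T ⁻¹' (A ×ˢ B)).indicator w u
            ∂(volume.restrict (Set.univ.pi fun _ : Fin d => Set.Icc (0:ℝ) 1)) :=
          (lintegral_indicator hpre w).symm
      _ = ∫⁻ u, F u ∂(Measure.pi fun _ : Fin d => volume.restrict (Set.Icc (0:ℝ) 1)) := by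
          rw [← restrict_pi_cube]; exact lintegral_congr hind
      _ = ∫⁻ q, F (ψ q)
            ∂((volume.restrict (Set.Icc (0:ℝ) 1)).prod
              (Measure.pi fun _ : {k : Fin d // k ≠ j} => volume.restrict (Set.Icc (0:ℝ) 1))) :=
          (MPψ.lintegral_comp hFm).symm
      _ = ∫⁻ y, ∫⁻ x, F (ψ (x, y)) ∂(volume.restrict (Set.Icc (0:ℝ) 1))
            ∂(Measure.pi fun _ : {k : Fin d // k ≠ j} => volume.restrict (Set.Icc (0:ℝ) 1)) :=
          lintegral_prod_symm' _ (hFm.comp MPψ.measurable)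
      _ = ∫⁻ y, (ν₁ A) * B.indicator 1 y
            ∂(Measure.pi fun _ : {k : Fin d // k ≠ j} => volume.restrict (Set.Icc (0:ℝ) 1)) := by
          refine lintegral_congr fun y => ?_
          have hFx : ∀ x, F (ψ (x, y))
              = (A.indicator 1 (Int.fract ((if s j then 1 - x else x)
                    + ∑ k : {k : Fin d // k ≠ j}, (if s k.1 then 1 - y k else y k)))
                  * ENNReal.ofReal (f (Int.fract ((if s j then 1 - x else x)
                    + ∑ k : {k : Fin d // k ≠ j}, (if s k.1 then 1 - y k else y k)))))
                * B.indicator 1 y := by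
            intro x
            simp only [hF]
            rw [hYψ (x, y), hPψ (x, y)]
          have hxm : Measurable fun x : ℝ => (if s j then 1 - x else x)
              + (∑ k : {k : Fin d // k ≠ j}, (if s k.1 then 1 - y k else y k)) := by
            apply Measurable.add_const
            by_cases h : s j = true
            · simp only [if_pos h]
              exact measurable_const.sub measurable_id
            · simp only [if_neg h]
              exact measurable_id
          simp_rw [hFx]
          rw [lintegral_mul_const' (B.indicator 1 y) _
            (by by_cases h : y ∈ B <;> simp [h])]
          rw [hG]
      _ = ν₁ A * ν₂ B := by
          rw [lintegral_const_mul' (ν₁ A) _ (measure_ne_top ν₁ A),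
            lintegral_indicator_one hB, hv2]
  have hmain : Measure.map T μ = ν₁.prod ν₂ :=
    (Measure.prod_eq fun A B hA hB => hrect A B hA hB).symm
  have hi : Measure.map Y μ = ν₁ := by
    rw [show Y = Prod.fst ∘ T from rfl, ← Measure.map_map measurable_fst hTm, hmain,
      Measure.map_fst_prod, hν₂univ, one_smul]
  have hii : Measure.map P μ = ν₂ := by
    rw [show P = Prod.snd ∘ T from rfl, ← Measure.map_map measurable_snd hTm, hmain,
      Measure.map_snd_prod, hν₁univ, one_smul]
  refine ⟨hi, hii, ?_⟩
  show Measure.map T μ = (Measure.map Y μ).prod (Measure.map P μ)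
  rw [hi, hii]
  exact hmain
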